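/- Let (X,d) be a nonempty complete metric space and let {f₁,...,fₙ} be a commuting λ-contractive family of continuous self-maps of X (each fᵢ∘fⱼ = fⱼ∘fᵢ). If every λ-contractive commuting family of n−1 continuous operators on a nonempty complete metric space has a common fixed point, and f₁ has a fixed point, then f₁,...,fₙ have a common fixed point. In particular: if some fᵢ has a fixed point and the set of its fixed points is preserved by the other maps, the induction goes through; concretely, the set S₁ of fixed points of f₁ is a nonempty closed subset of X invariant under f₂,...,fₙ, and {f₂|S₁,...,fₙ|S₁} is a λ-contractive family on S₁. -/

import Mathlib

universe u

theorem stmt1 {X : Type u} [MetricSpace X] [CompleteSpace X] [Nonempty X]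
    (n : ℕ) (lam : ℝ) (hlam0 : 0 < lam) (hlam1 : lam < 1)
    (f : Fin (n + 1) → X → X)
    (hcont : ∀ i, Continuous (f i))
    (hcomm : ∀ i j, f i ∘ f j = f j ∘ f i)
    (hcontr : ∀ x y : X, ∃ i, dist (f i x) (f i y) ≤ lam * dist x y)
    (IH : ∀ (Y : Type u) [MetricSpace Y] [CompleteSpace Y] [Nonempty Y]
        (g : Fin n → Y → Y), (∀ i, Continuous (g i)) →
        (∀ i j, g i ∘ g j = g j ∘ g i) →
        (∀ x y : Y, ∃ i, dist (g i x) (g i y) ≤ lam * dist x y) →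
        ∃ y : Y, ∀ i, g i y = y)
    (hfix : ∃ x : X, f 0 x = x) :
    ∃ x : X, ∀ i, f i x = x := by
  cases n with
  | zero =>
    obtain ⟨x, hx⟩ := hfix
    exact ⟨x, fun i => by rw [Fin.fin_one_eq_zero i]; exact hx⟩
  | succ m =>
  -- the fixed point set of f 0
  let Y := {x : X // f 0 x = x}
  have hclosed : IsClosed {x : X | f 0 x = x} := isClosed_eq (hcont 0) continuous_id
  haveI : CompleteSpace Y := hclosed.completeSpace_coe
  obtain ⟨x0, hx0⟩ := hfix
  haveI : Nonempty Y := ⟨⟨x0, hx0⟩⟩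
  have hinv : ∀ (i : Fin (m + 1)) (y : Y), f 0 (f i.succ y.val) = f i.succ y.val := by
    intro i y
    have := congrFun (hcomm 0 i.succ) y.val
    simp only [Function.comp_apply] at this
    rw [this, y.property]
  let g : Fin (m + 1) → Y → Y := fun i y => ⟨f i.succ y.val, hinv i y⟩
  have hgc : ∀ i, Continuous (g i) := fun i =>
    Continuous.subtype_mk ((hcont i.succ).comp continuous_subtype_val) _
  have hgcomm : ∀ i j, g i ∘ g j = g j ∘ g i := by
    intro i j
    funext y
    apply Subtype.ext
    exact congrFun (hcomm i.succ j.succ) y.val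
  have hgcontr : ∀ x y : Y, ∃ i, dist (g i x) (g i y) ≤ lam * dist x y := by
    intro x y
    obtain ⟨i, hi⟩ := hcontr x.val y.val
    refine Fin.cases ?_ (fun j hj => ⟨j, hj⟩) i hi
    · intro h0
      rw [x.property, y.property] at h0
      have hd : dist x y = 0 := by
        rw [Subtype.dist_eq]
        nlinarith [dist_nonneg (x := x.val) (y := y.val)]
      refine ⟨0, ?_⟩
      have : x = y := dist_eq_zero.mp hd
      subst this
      simp [hd]
  obtain ⟨y, hy⟩ := IH Y g hgc hgcomm hgcontr
  refine ⟨y.val, fun i => ?_⟩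
  refine Fin.cases y.property (fun j => ?_) i
  exact congrArg Subtype.val (hy j)
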